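/- Let A be a filter space with accumulation point a and B = A \ {a}. For each b ∈ B let f_b : X_b → Y_b be a map between topological spaces with f_b(x_b) = y_b for chosen points x_b ∈ X_b, y_b ∈ Y_b, and let Σf_b : Σ_A(X_b, x_b) → Σ_A(Y_b, y_b) be the induced map defined by (Σf_b)(b, x) = (b, f_b(x)) for x ∈ X_b \ {x_b} and (Σf_b)(x) = x for x ∈ A. If every f_b is continuous, then Σf_b is continuous; if every f_b is a quotient map, then Σf_b is a quotient map. -/

import Mathlib

universe u

/-- A filter space: a topological space with precisely one accumulation (non-isolated) point,
namely `a`. -/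
def IsFilterSpace (X : Type u) [TopologicalSpace X] (a : X) : Prop :=
  ¬ IsOpen ({a} : Set X) ∧ ∀ x : X, x ≠ a → IsOpen ({x} : Set X)

/-- The underlying set `F = A ∪ ⋃_{b ∈ B} {b} × (X_b \ {x_b})` of the `A`-sum, where
`B = A \ {a}`. -/
def ASumPt (A : Type u) (a : A) (X : {b : A // b ≠ a} → Type u)
    (x : (b : {b : A // b ≠ a}) → X b) : Type u :=
  A ⊕ (Σ b : {b : A // b ≠ a}, {y : X b // y ≠ x b})

open scoped Classical in
/-- The defining map `φ : A ⊔ (⊔_{b ∈ B} X_b) → F` of the `A`-sum. -/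
noncomputable def asumDefiningMap (A : Type u) (a : A) (X : {b : A // b ≠ a} → Type u)
    (x : (b : {b : A // b ≠ a}) → X b) :
    (A ⊕ (Σ b : {b : A // b ≠ a}, X b)) → ASumPt A a X x :=
  fun z => match z with
  | Sum.inl p => Sum.inl p
  | Sum.inr ⟨b, y⟩ => if h : y = x b then Sum.inl b.1 else Sum.inr ⟨b, ⟨y, h⟩⟩

/-- The `A`-sum `Σ_A(X_b, x_b)`: the quotient topology on `F` with respect to the defining
map `φ`. -/
noncomputable instance asumTop (A : Type u) [TopologicalSpace A] (a : A)
    (X : {b : A // b ≠ a} → Type u) [(b : {b : A // b ≠ a}) → TopologicalSpace (X b)]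
    (x : (b : {b : A // b ≠ a}) → X b) : TopologicalSpace (ASumPt A a X x) :=
  TopologicalSpace.coinduced (asumDefiningMap A a X x) inferInstance

open scoped Classical in
/-- The induced map `Σ f_b` between `A`-sums, sending `(b, v)` to `(b, f_b v)` (which is the
point `b ∈ A` of the target when `f_b v = y b`) and fixing the points of `A`. -/
noncomputable def asumMap (A : Type u) (a : A) (X Y : {b : A // b ≠ a} → Type u)
    (x : (b : {b : A // b ≠ a}) → X b) (y : (b : {b : A // b ≠ a}) → Y b)
    (f : (b : {b : A // b ≠ a}) → X b → Y b) : ASumPt A a X x → ASumPt A a Y y :=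
  fun z => match z with
  | Sum.inl p => Sum.inl p
  | Sum.inr ⟨b, v⟩ =>
      if h : f b v.1 = y b then Sum.inl b.1 else Sum.inr ⟨b, ⟨f b v.1, h⟩⟩

section
set_option linter.unusedSectionVars false
variable (A : Type u) [TopologicalSpace A] (a : A)
    (X Y : {b : A // b ≠ a} → Type u) [(b : {b : A // b ≠ a}) → TopologicalSpace (X b)]
    [(b : {b : A // b ≠ a}) → TopologicalSpace (Y b)]
    (x : (b : {b : A // b ≠ a}) → X b) (y : (b : {b : A // b ≠ a}) → Y b)
    (f : (b : {b : A // b ≠ a}) → X b → Y b)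

theorem asum_phi_surj : Function.Surjective (asumDefiningMap A a X x) := by
  rintro (p | ⟨b, v, h⟩)
  · exact ⟨Sum.inl p, rfl⟩
  · exact ⟨Sum.inr ⟨b, v⟩, by simp [asumDefiningMap, h]; rfl⟩

theorem asum_phi_quot : Topology.IsQuotientMap (asumDefiningMap A a X x) :=
  ⟨⟨rfl⟩, asum_phi_surj A a X x⟩

theorem asum_key (hf : ∀ b, f b (x b) = y b) :
    asumMap A a X Y x y f ∘ asumDefiningMap A a X x =
      asumDefiningMap A a Y y ∘ Sum.map id (Sigma.map id f) := by
  funext z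
  rcases z with p | ⟨b, v⟩
  · rfl
  · by_cases h : v = x b
    · subst h
      simp [asumDefiningMap, asumMap, Sigma.map, hf b]; rfl
    · by_cases h2 : f b v = y b <;>
        simp [asumDefiningMap, asumMap, Sigma.map, h, h2] <;> rfl

theorem asum_g_cont (hf : ∀ b, Continuous (f b)) :
    Continuous (Sum.map (@id A) (Sigma.map id f)) :=
  continuous_id.sumMap (Continuous.sigma_map hf)

theorem asum_g_quot (hf : ∀ b, Topology.IsQuotientMap (f b)) :
    Topology.IsQuotientMap (Sum.map (@id A) (Sigma.map id f)) := by
  rw [Topology.isQuotientMap_iff, Topology.isCoinducing_iff, and_comm]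
  constructor
  · exact (Function.surjective_id).sumMap
      (Function.Surjective.sigma_map Function.surjective_id fun b => (hf b).surjective)
  · intro s
    rw [isOpen_sum_iff, isOpen_sum_iff]
    have h1 : Sum.inl ⁻¹' (Sum.map (@id A) (Sigma.map id f) ⁻¹' s) = Sum.inl ⁻¹' s := rfl
    have h2 : Sum.inr ⁻¹' (Sum.map (@id A) (Sigma.map id f) ⁻¹' s) =
        Sigma.map id f ⁻¹' (Sum.inr ⁻¹' s) := rfl
    rw [h1, h2, isOpen_sigma_iff, isOpen_sigma_iff]
    refine and_congr Iff.rfl (forall_congr' fun b => ?_)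
    have h3 : Sigma.mk b ⁻¹' (Sigma.map id f ⁻¹' (Sum.inr ⁻¹' s)) =
        f b ⁻¹' (Sigma.mk b ⁻¹' (Sum.inr ⁻¹' s)) := rfl
    rw [h3, (hf b).isOpen_preimage]
end


/-- if all `f_b` are continuous then `Σ f_b` is continuous; if all `f_b` are
quotient maps then `Σ f_b` is a quotient map. -/
theorem stmt6 (A : Type u) [TopologicalSpace A] (a : A) (hA : IsFilterSpace A a)
    (X Y : {b : A // b ≠ a} → Type u) [(b : {b : A // b ≠ a}) → TopologicalSpace (X b)]
    [(b : {b : A // b ≠ a}) → TopologicalSpace (Y b)]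
    (x : (b : {b : A // b ≠ a}) → X b) (y : (b : {b : A // b ≠ a}) → Y b)
    (f : (b : {b : A // b ≠ a}) → X b → Y b) (hf : ∀ b, f b (x b) = y b) :
    ((∀ b, Continuous (f b)) → Continuous (asumMap A a X Y x y f)) ∧
    ((∀ b, Topology.IsQuotientMap (f b)) → Topology.IsQuotientMap (asumMap A a X Y x y f)) := by
  have key := asum_key A a X Y x y f hf
  have hcont : (∀ b, Continuous (f b)) → Continuous (asumMap A a X Y x y f) := by
    intro hc
    rw [(asum_phi_quot A a X x).continuous_iff, key]
    exact (asum_phi_quot A a Y y).continuous.comp (asum_g_cont A a X Y f hc)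
  refine ⟨hcont, fun hq => ?_⟩
  refine Topology.IsQuotientMap.of_comp (asum_phi_quot A a X x).continuous
    (hcont fun b => (hq b).continuous) ?_
  rw [key]
  exact (asum_phi_quot A a Y y).comp (asum_g_quot A a X Y f hq)
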